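/- Let (X,d,W) be a W-hyperbolic space, C⊆X convex, T:C→C nonexpansive, (xₙ) the Ishikawa iteration starting at x∈C with coefficients (λₙ),(sₙ)⊆[0,1], and suppose d(xₙ,Txₙ) ≤ 2b for all n (where b>0). Then for all m,n∈ℕ: d(x_{n+m}, Tx_{n+m}) ≤ d(xₙ,Txₙ) + 4b·(α_{n+m-1} - α_{n-1}), where αₙ := ∑_{i=0}^{n} sᵢ(1-λᵢ) (and α_{-1} := 0). -/

import Mathlib

theorem stmt_13 {X : Type*} [MetricSpace X] (W : X → X → ℝ → X)
    (W1 : ∀ (x y z : X), ∀ l ∈ Set.Icc (0:ℝ) 1,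
      dist z (W x y l) ≤ (1 - l) * dist z x + l * dist z y)
    (W2 : ∀ (x y : X), ∀ l ∈ Set.Icc (0:ℝ) 1, ∀ l' ∈ Set.Icc (0:ℝ) 1,
      dist (W x y l) (W x y l') = |l - l'| * dist x y)
    (W3 : ∀ (x y : X), ∀ l ∈ Set.Icc (0:ℝ) 1, W x y l = W y x (1 - l))
    (W4 : ∀ (x y z w : X), ∀ l ∈ Set.Icc (0:ℝ) 1,
      dist (W x z l) (W y w l) ≤ (1 - l) * dist x y + l * dist z w)
    (C : Set X)
    (hC : ∀ x ∈ C, ∀ y ∈ C, ∀ l ∈ Set.Icc (0:ℝ) 1, W x y l ∈ C)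
    (T : X → X) (hTC : ∀ z ∈ C, T z ∈ C)
    (hTnon : ∀ z ∈ C, ∀ w ∈ C, dist (T z) (T w) ≤ dist z w)
    (lam s : ℕ → ℝ) (hlam : ∀ n, lam n ∈ Set.Icc (0:ℝ) 1) (hs : ∀ n, s n ∈ Set.Icc (0:ℝ) 1)
    (x0 : X) (hx0C : x0 ∈ C) (x : ℕ → X) (hx0 : x 0 = x0)
    (hrec : ∀ n, x (n+1) = W (x n) (T (W (x n) (T (x n)) (s n))) (lam n))
    (b : ℝ) (hb : 0 < b)
    (hbnd : ∀ n : ℕ, dist (x n) (T (x n)) ≤ 2 * b) :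
    ∀ m n : ℕ, dist (x (n+m)) (T (x (n+m))) ≤ dist (x n) (T (x n)) +
      4 * b * ((∑ i ∈ Finset.range (n+m), s i * (1 - lam i)) - ∑ i ∈ Finset.range n, s i * (1 - lam i)) := by
  have hW0 : ∀ p q : X, W p q 0 = p := by
    intro p q
    have h := W1 p q p 0 (by norm_num)
    simp only [dist_self, sub_zero, one_mul, zero_mul, mul_zero, add_zero] at h
    exact (dist_le_zero.mp (by linarith)).symm
  have hWone : ∀ p q : X, W p q 1 = q := by
    intro p q
    have h := W1 p q q 1 (by norm_num)
    simp only [dist_self, sub_self, zero_mul, one_mul, mul_zero, zero_add] at h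
    exact (dist_le_zero.mp (by linarith)).symm
  have hxC : ∀ k, x k ∈ C := by
    intro k
    induction k with
    | zero => rw [hx0]; exact hx0C
    | succ k ih =>
      rw [hrec k]
      exact hC _ ih _ (hTC _ (hC _ ih _ (hTC _ ih) _ (hs k))) _ (hlam k)
  have key : ∀ k, dist (x (k+1)) (T (x (k+1))) ≤
      dist (x k) (T (x k)) + 4 * b * (s k * (1 - lam k)) := by
    intro k
    obtain ⟨hs0, hs1⟩ := hs k
    obtain ⟨hl0, hl1⟩ := hlam k
    set u := x k with hu
    set a := dist u (T u) with ha
    set y := W u (T u) (s k) with hy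
    have huC : u ∈ C := hxC k
    have hTuC := hTC u huC
    have hyC : y ∈ C := hC u huC (T u) hTuC _ ⟨hs0, hs1⟩
    have hTyC := hTC y hyC
    have hx1 : x (k+1) = W u (T y) (lam k) := hrec k
    have hx1C : x (k+1) ∈ C := by
      rw [hx1]; exact hC u huC (T y) hTyC _ ⟨hl0, hl1⟩
    have d_uy : dist u y = s k * a := by
      have h := W2 u (T u) (s k) ⟨hs0, hs1⟩ 0 (by norm_num)
      rw [hW0] at h
      rw [dist_comm, hy, h]
      simp [abs_of_nonneg hs0, ha]
    have d_yTu : dist y (T u) = (1 - s k) * a := by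
      have h := W2 u (T u) (s k) ⟨hs0, hs1⟩ 1 (by norm_num)
      rw [hWone] at h
      rw [hy, h, abs_of_nonpos (by linarith)]
      ring_nf
      rw [ha]
    have d_uTy : dist u (T y) ≤ (1 + s k) * a := by
      have h1 : dist u (T y) ≤ dist u (T u) + dist (T u) (T y) := dist_triangle _ _ _
      have h2 : dist (T u) (T y) ≤ dist u y := hTnon u huC y hyC
      rw [d_uy] at h2
      nlinarith
    have d1 : dist (x (k+1)) (T y) = (1 - lam k) * dist u (T y) := by
      have h := W2 u (T y) (lam k) ⟨hl0, hl1⟩ 1 (by norm_num)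
      rw [hWone] at h
      rw [hx1, h, abs_of_nonpos (by linarith)]
      ring_nf
    have d_yTy : dist y (T y) ≤ a := by
      have h1 : dist y (T y) ≤ dist y (T u) + dist (T u) (T y) := dist_triangle _ _ _
      have h2 : dist (T u) (T y) ≤ dist u y := hTnon u huC y hyC
      rw [d_uy] at h2
      rw [d_yTu] at h1
      nlinarith
    have d2 : dist y (x (k+1)) ≤ (1 - lam k) * dist y u + lam k * dist y (T y) := by
      rw [hx1]
      exact W1 u (T y) y (lam k) ⟨hl0, hl1⟩
    have htri : dist (x (k+1)) (T (x (k+1))) ≤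
        dist (x (k+1)) (T y) + dist (T y) (T (x (k+1))) := dist_triangle _ _ _
    have hnon2 : dist (T y) (T (x (k+1))) ≤ dist y (x (k+1)) := hTnon y hyC _ hx1C
    have d_yu : dist y u = s k * a := by rw [dist_comm]; exact d_uy
    have habd : a ≤ 2 * b := hbnd k
    have ha0 : 0 ≤ a := dist_nonneg
    have hduTy0 : 0 ≤ dist u (T y) := dist_nonneg
    nlinarith [mul_nonneg (mul_nonneg hs0 (by linarith : (0:ℝ) ≤ 1 - lam k)) (by linarith : (0:ℝ) ≤ 2*b - a),
      mul_le_mul_of_nonneg_left d_uTy (by linarith : (0:ℝ) ≤ 1 - lam k),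
      mul_le_mul_of_nonneg_left d_yTy hl0]
  intro m
  induction m with
  | zero => intro n; simp
  | succ m ih =>
    intro n
    have h1 := ih n
    have h2 := key (n + m)
    rw [show n + (m+1) = n + m + 1 from rfl, Finset.sum_range_succ]
    calc dist (x ((n+m)+1)) (T (x ((n+m)+1)))
        ≤ dist (x (n+m)) (T (x (n+m))) + 4 * b * (s (n+m) * (1 - lam (n+m))) := h2
      _ ≤ _ := by nlinarith
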